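/- Define the binary operation ∗ on the free abelian group (over a commutative ring k of characteristic 0) on planar binary trees by the recursion t ∗ | = | ∗ t = t and t ∗ t' = t₁ ∨ (t₂ ∗ t') + (t ∗ t'₁) ∨ t'₂ for t = t₁ ∨ t₂ and t' = t'₁ ∨ t'₂, extended bilinearly. Then ∗ is associative. -/

import Mathlib

/-- Planar binary trees: `leaf` is the tree `|` with no internal vertex,
`node t₁ t₂` is the grafting `t₁ ∨ t₂`. -/
inductive PBT where
  | leaf : PBT
  | node : PBT → PBT → PBT
deriving DecidableEq

namespace PBT

/-- The order of a planar binary tree: its number of internal vertices. -/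
def order : PBT → ℕ
  | leaf => 0
  | node a b => order a + order b + 1

/-- The number of leaves of a planar binary tree. -/
def leaves : PBT → ℕ
  | leaf => 1
  | node a b => leaves a + leaves b

end PBT

/-- The Loday–Ronco product `∗` on basis trees, with values in the free `k`-module
on planar binary trees: `t ∗ | = | ∗ t = t` and
`(t₁∨t₂) ∗ (t'₁∨t'₂) = t₁ ∨ (t₂ ∗ (t'₁∨t'₂)) + ((t₁∨t₂) ∗ t'₁) ∨ t'₂`. -/
noncomputable def PBT.star (k : Type*) [CommRing k] : PBT → PBT → (PBT →₀ k)
  | .leaf, t => Finsupp.single t 1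
  | .node a b, .leaf => Finsupp.single (.node a b) 1
  | .node a b, .node c d =>
      Finsupp.mapDomain (fun u => PBT.node a u) (PBT.star k b (.node c d))
      + Finsupp.mapDomain (fun u => PBT.node u d) (PBT.star k (.node a b) c)
termination_by t s => t.order + s.order
decreasing_by all_goals simp [PBT.order]; try omega

/-- The bilinear extension of `PBT.star` to the free `k`-module `k[Y^∞]` on
planar binary trees. -/
noncomputable def PBT.starL (k : Type*) [CommRing k] (x y : PBT →₀ k) : PBT →₀ k :=
  x.sum fun t a => y.sum fun s b => (a * b) • PBT.star k t s

section Aux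

open Finsupp

variable (k : Type*) [CommRing k]

/-- bilinear grafting -/
noncomputable def Vmap : (PBT →₀ k) →ₗ[k] (PBT →₀ k) →ₗ[k] (PBT →₀ k) :=
  Finsupp.lsum k fun a => LinearMap.toSpanSingleton k _
    (Finsupp.lsum k fun b => LinearMap.toSpanSingleton k _ (Finsupp.single (PBT.node a b) 1))

noncomputable def Bmap : (PBT →₀ k) →ₗ[k] (PBT →₀ k) →ₗ[k] (PBT →₀ k) :=
  Finsupp.lsum k fun t => LinearMap.toSpanSingleton k _
    (Finsupp.lsum k fun s => LinearMap.toSpanSingleton k _ (PBT.star k t s))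

@[simp] lemma Vmap_single_single (a b : PBT) (r p : k) :
    Vmap k (Finsupp.single a r) (Finsupp.single b p) = Finsupp.single (PBT.node a b) (r * p) := by
  simp [Vmap, Finsupp.lsum_single, LinearMap.toSpanSingleton_apply, Finsupp.smul_single, mul_smul]

@[simp] lemma Bmap_single_single (t s : PBT) (r p : k) :
    Bmap k (Finsupp.single t r) (Finsupp.single s p) = (r * p) • PBT.star k t s := by
  simp [Bmap, Finsupp.lsum_single, LinearMap.toSpanSingleton_apply, mul_smul]

lemma mapDomain_node_left (a : PBT) (Y : PBT →₀ k) :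
    Finsupp.mapDomain (fun u => PBT.node a u) Y = Vmap k (Finsupp.single a 1) Y := by
  induction Y using Finsupp.induction_linear with
  | zero => simp
  | add f g hf hg => rw [Finsupp.mapDomain_add, map_add, hf, hg]
  | single w r => simp [Finsupp.mapDomain_single]

lemma mapDomain_node_right (d : PBT) (Y : PBT →₀ k) :
    Finsupp.mapDomain (fun u => PBT.node u d) Y = Vmap k Y (Finsupp.single d 1) := by
  induction Y using Finsupp.induction_linear with
  | zero => simp
  | add f g hf hg => rw [Finsupp.mapDomain_add, map_add, LinearMap.add_apply, hf, hg]
  | single w r => simp [Finsupp.mapDomain_single]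

lemma star_node_node (a b c d : PBT) :
    PBT.star k (.node a b) (.node c d)
      = Vmap k (Finsupp.single a 1) (PBT.star k b (.node c d))
        + Vmap k (PBT.star k (.node a b) c) (Finsupp.single d 1) := by
  rw [PBT.star, mapDomain_node_left, mapDomain_node_right]

@[simp] lemma star_leaf_left (t : PBT) : PBT.star k .leaf t = Finsupp.single t 1 := by
  rw [PBT.star]

@[simp] lemma star_leaf_right (t : PBT) : PBT.star k t .leaf = Finsupp.single t 1 := by
  cases t <;> rw [PBT.star]

@[simp] lemma Bmap_leaf_left (Y : PBT →₀ k) : Bmap k (Finsupp.single PBT.leaf 1) Y = Y := by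
  induction Y using Finsupp.induction_linear with
  | zero => simp
  | add f g hf hg => rw [map_add, hf, hg]
  | single w r => simp

@[simp] lemma Bmap_leaf_right (X : PBT →₀ k) : Bmap k X (Finsupp.single PBT.leaf 1) = X := by
  induction X using Finsupp.induction_linear with
  | zero => simp
  | add f g hf hg => rw [map_add, LinearMap.add_apply, hf, hg]
  | single w r => simp

/-- L1 -/
lemma BV_left_left (a e f : PBT) (Y : PBT →₀ k) :
    Bmap k (Vmap k (Finsupp.single a 1) Y) (Finsupp.single (PBT.node e f) 1)
      = Vmap k (Finsupp.single a 1) (Bmap k Y (Finsupp.single (PBT.node e f) 1))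
        + Vmap k (Bmap k (Vmap k (Finsupp.single a 1) Y) (Finsupp.single e 1))
            (Finsupp.single f 1) := by
  induction Y using Finsupp.induction_linear with
  | zero => simp
  | add p q hp hq =>
      simp only [map_add, LinearMap.add_apply] at *
      rw [hp, hq]; abel
  | single w r =>
      simp only [Vmap_single_single, mul_one, one_mul, Bmap_single_single]
      rw [star_node_node]
      simp only [map_smul, LinearMap.smul_apply, smul_add, map_add, LinearMap.add_apply]

/-- L2 -/
lemma BV_right_left (d e f : PBT) (Y : PBT →₀ k) :
    Bmap k (Vmap k Y (Finsupp.single d 1)) (Finsupp.single (PBT.node e f) 1)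
      = Vmap k Y (PBT.star k d (PBT.node e f))
        + Vmap k (Bmap k (Vmap k Y (Finsupp.single d 1)) (Finsupp.single e 1))
            (Finsupp.single f 1) := by
  induction Y using Finsupp.induction_linear with
  | zero => simp
  | add p q hp hq =>
      simp only [map_add, LinearMap.add_apply] at *
      rw [hp, hq]; abel
  | single w r =>
      simp only [Vmap_single_single, mul_one, one_mul, Bmap_single_single]
      rw [star_node_node]
      have : Finsupp.single w r = r • Finsupp.single w (1:k) := by simp
      rw [this]
      simp only [map_smul, LinearMap.smul_apply, smul_add, map_add, LinearMap.add_apply]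

/-- R1 -/
lemma BV_left_right (a b c : PBT) (Z : PBT →₀ k) :
    Bmap k (Finsupp.single (PBT.node a b) 1) (Vmap k (Finsupp.single c 1) Z)
      = Vmap k (Finsupp.single a 1)
          (Bmap k (Finsupp.single b 1) (Vmap k (Finsupp.single c 1) Z))
        + Vmap k (PBT.star k (PBT.node a b) c) Z := by
  induction Z using Finsupp.induction_linear with
  | zero => simp
  | add p q hp hq =>
      simp only [map_add, LinearMap.add_apply] at *
      rw [hp, hq]; abel
  | single w r =>
      simp only [Vmap_single_single, mul_one, one_mul, Bmap_single_single]
      rw [star_node_node]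
      have : Finsupp.single w r = r • Finsupp.single w (1:k) := by simp
      rw [this]
      simp only [map_smul, LinearMap.smul_apply, smul_add, map_add, LinearMap.add_apply]

/-- R2 -/
lemma BV_right_right (a b f : PBT) (W : PBT →₀ k) :
    Bmap k (Finsupp.single (PBT.node a b) 1) (Vmap k W (Finsupp.single f 1))
      = Vmap k (Finsupp.single a 1)
          (Bmap k (Finsupp.single b 1) (Vmap k W (Finsupp.single f 1)))
        + Vmap k (Bmap k (Finsupp.single (PBT.node a b) 1) W) (Finsupp.single f 1) := by
  induction W using Finsupp.induction_linear with
  | zero => simp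
  | add p q hp hq =>
      simp only [map_add, LinearMap.add_apply] at *
      rw [hp, hq]; abel
  | single w r =>
      simp only [Vmap_single_single, mul_one, one_mul, Bmap_single_single]
      rw [star_node_node]
      simp only [map_smul, LinearMap.smul_apply, smul_add, map_add, LinearMap.add_apply]

theorem core : ∀ t s u : PBT,
    Bmap k (PBT.star k t s) (Finsupp.single u 1)
      = Bmap k (Finsupp.single t 1) (PBT.star k s u)
  | .leaf, s, u => by simp
  | .node a b, .leaf, u => by simp
  | .node a b, s, .leaf => by simp
  | .node a b, .node c d, .node e f => by
      have IH1 := core b (.node c d) (.node e f)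
      have IH2 := core (.node a b) (.node c d) e
      have IH2' :
          Bmap k (Vmap k (Finsupp.single a 1) (PBT.star k b (.node c d)))
              (Finsupp.single e 1)
            + Bmap k (Vmap k (PBT.star k (.node a b) c) (Finsupp.single d 1))
              (Finsupp.single e 1)
          = Bmap k (Finsupp.single (PBT.node a b) 1) (PBT.star k (.node c d) e) := by
        rw [← IH2, star_node_node, map_add, LinearMap.add_apply]
      have hsu : PBT.star k (PBT.node c d) (PBT.node e f)
          = Vmap k (Finsupp.single c 1) (PBT.star k d (.node e f))
            + Vmap k (PBT.star k (.node c d) e) (Finsupp.single f 1) :=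
        star_node_node k c d e f
      have hts : PBT.star k (PBT.node a b) (PBT.node c d)
          = Vmap k (Finsupp.single a 1) (PBT.star k b (.node c d))
            + Vmap k (PBT.star k (.node a b) c) (Finsupp.single d 1) :=
        star_node_node k a b c d
      rw [hts, map_add, LinearMap.add_apply, BV_left_left, BV_right_left, IH1, hsu]
      simp only [map_add]
      rw [BV_left_right, BV_right_right, ← IH2']
      simp only [map_add, LinearMap.add_apply]
      abel
termination_by t s u => t.order + s.order + u.order
decreasing_by all_goals simp [PBT.order]; try omega

lemma starL_eq (x y : PBT →₀ k) : PBT.starL k x y = Bmap k x y := by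
  rw [PBT.starL, Bmap, Finsupp.lsum_apply]
  rw [LinearMap.finsupp_sum_apply]
  refine Finsupp.sum_congr fun t _ => ?_
  rw [LinearMap.toSpanSingleton_apply, LinearMap.smul_apply, Finsupp.lsum_apply,
      Finsupp.smul_sum]
  refine Finsupp.sum_congr fun s _ => ?_
  rw [LinearMap.toSpanSingleton_apply, mul_smul]

end Aux

/-- The Loday–Ronco product `∗` (defined by `t ∗ | = | ∗ t = t` and
`t ∗ t' = t₁ ∨ (t₂ ∗ t') + (t ∗ t'₁) ∨ t'₂` for `t = t₁∨t₂`, `t' = t'₁∨t'₂`,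
extended bilinearly over a commutative ring `k` of characteristic `0`) is associative. -/
theorem stmt7 (k : Type*) [CommRing k] [CharZero k] (x y z : PBT →₀ k) :
    PBT.starL k (PBT.starL k x y) z = PBT.starL k x (PBT.starL k y z) := by
  simp only [starL_eq]
  induction x using Finsupp.induction_linear with
  | zero => simp
  | add p q hp hq => simp only [map_add, LinearMap.add_apply, hp, hq]
  | single t r =>
    induction y using Finsupp.induction_linear with
    | zero => simp
    | add p q hp hq => simp only [map_add, LinearMap.add_apply, hp, hq]
    | single s p =>
      induction z using Finsupp.induction_linear with
      | zero => simp
      | add p' q' hp hq => simp only [map_add, LinearMap.add_apply, hp, hq]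
      | single u q =>
        have h1 : Finsupp.single t r = r • Finsupp.single t (1:k) := by simp
        have h2 : Finsupp.single s p = p • Finsupp.single s (1:k) := by simp
        have h3 : Finsupp.single u q = q • Finsupp.single u (1:k) := by simp
        rw [h1, h2, h3]
        simp only [map_smul, LinearMap.smul_apply]
        rw [Bmap_single_single, one_mul, one_smul, Bmap_single_single, one_mul, one_smul,
            core]
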